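/- Let t be an SL₂-tiling with associated functions p and q. If integers b, v satisfy t(b,v−1) < t(b,v) and t(b,v) > t(b,v+1) (a local maximum in the b-th row), then q(v−1,v+1) = 1. Symmetrically, if t(b−1,v) < t(b,v) and t(b,v) > t(b+1,v), then p(b−1,b+1) = 1. -/

import Mathlib

/-- An `SL₂`-tiling: all entries are `≥ 1` and every adjacent `2×2` minor is `1`. -/
def IsSL2Tiling (t : ℤ → ℤ → ℤ) : Prop :=
  (∀ i j, 1 ≤ t i j) ∧
  (∀ i j, t i j * t (i+1) (j+1) - t i (j+1) * t (i+1) j = 1)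

/-- The infinite frieze `p` associated to an `SL₂`-tiling. -/
def pFrieze (t : ℤ → ℤ → ℤ) (a d : ℤ) : ℤ := t a 0 * t d 1 - t a 1 * t d 0

/-- The infinite frieze `q` associated to an `SL₂`-tiling. -/
def qFrieze (t : ℤ → ℤ → ℤ) (u x : ℤ) : ℤ := t 0 u * t 1 x - t 0 x * t 1 u

lemma q_local_max (t : ℤ → ℤ → ℤ) (ht : IsSL2Tiling t) (b v : ℤ)
    (h1 : t b (v-1) < t b v) (h2 : t b (v+1) < t b v) :
    qFrieze t (v-1) (v+1) = 1 := by
  obtain ⟨hpos, hdet⟩ := ht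
  set Q : ℤ → ℤ := fun i => t i (v-1) * t (i+1) (v+1) - t i (v+1) * t (i+1) (v-1)
    with hQ
  have key1 : ∀ i : ℤ, t i v * Q i = t i (v-1) + t i (v+1) := by
    intro i
    have d1 := hdet i (v-1)
    have d2 := hdet i v
    simp only [hQ] at *
    have e1 : v - 1 + 1 = v := by ring
    rw [e1] at d1
    linear_combination (t i (v-1)) * d2 + (t i (v+1)) * d1
  have key2 : ∀ i : ℤ, t (i+1) v * Q i = t (i+1) (v-1) + t (i+1) (v+1) := by
    intro i
    have d1 := hdet i (v-1)
    have d2 := hdet i v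
    simp only [hQ] at *
    have e1 : v - 1 + 1 = v := by ring
    rw [e1] at d1
    linear_combination (t (i+1) (v+1)) * d1 + (t (i+1) (v-1)) * d2
  have hstep : ∀ i : ℤ, Q i = Q (i+1) := by
    intro i
    have h := (key2 i).trans (key1 (i+1)).symm
    have hp : 0 < t (i+1) v := hpos (i+1) v
    exact mul_left_cancel₀ (ne_of_gt hp) h
  have hconst : ∀ i : ℤ, Q 0 = Q i := by
    intro i
    induction i using Int.induction_on with
    | zero => rfl
    | succ k ih => rw [ih, hstep k]
    | pred k ih => rw [ih, hstep (-(k:ℤ) - 1)]; norm_num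
  have hQb : Q b = 1 := by
    have hk := key1 b
    have hp : 0 < t b v := hpos b v
    have hub : t b v * Q b < t b v * 2 := by
      rw [hk]; omega
    have hprod : 0 < t b v * Q b := by
      rw [hk]
      have := hpos b (v-1)
      have := hpos b (v+1)
      omega
    have h1' : 0 < Q b := by nlinarith [hprod, hp]
    have h2' : Q b < 2 := lt_of_mul_lt_mul_left hub (le_of_lt hp)
    omega
  have : qFrieze t (v-1) (v+1) = Q 0 := by
    simp only [qFrieze, hQ]; norm_num
  rw [this, hconst b, hQb]

theorem local_max_gives_one (t : ℤ → ℤ → ℤ) (ht : IsSL2Tiling t) :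
    (∀ b v : ℤ, t b (v-1) < t b v → t b (v+1) < t b v →
      qFrieze t (v-1) (v+1) = 1) ∧
    (∀ b v : ℤ, t (b-1) v < t b v → t (b+1) v < t b v →
      pFrieze t (b-1) (b+1) = 1) := by
  constructor
  · intro b v h1 h2
    exact q_local_max t ht b v h1 h2
  · intro b v h1 h2
    have hts : IsSL2Tiling (fun i j => t j i) := by
      obtain ⟨hpos, hdet⟩ := ht
      refine ⟨fun i j => hpos j i, fun i j => ?_⟩
      have := hdet j i
      ring_nf at this ⊢
      linarith
    have := q_local_max (fun i j => t j i) hts v b h1 h2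
    simp only [qFrieze] at this
    simp only [pFrieze]
    linarith
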